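/- (Hölder + Hua counting bound for diagonal cubics) Assume char(F_q) > 3 and let a_1, …, a_s ∈ F_q(t)^× with 2 ≤ s ≤ 6. Then for all E ≥ 1, the number of tuples e ∈ F_q[t]^s with |e| ≤ E and Σ_{i=1}^s a_i e_i^3 = 0 is O_ε(E^{2+ε}) if 2 ≤ s ≤ 4, and O_ε(E^{s−2+ε}) if 5 ≤ s ≤ 6. -/

import Mathlib

open scoped Classical
open MeasureTheory

noncomputable section

variable (Fq : Type) [Field Fq] [Fintype Fq]

/-- The absolute value on `K_∞ = F_q((t⁻¹))`, realised as formal Laurent series in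
`X = t⁻¹`: for `α = Σ_{i ≤ M} α_i t^i` with `α_M ≠ 0` we have `|α| = q^M = q^(-order α)`. -/
def fabs (x : LaurentSeries Fq) : ℝ :=
  if x = 0 then 0 else (Fintype.card Fq : ℝ) ^ (-x.order : ℤ)

/-- The embedding of `O = F_q[t]` into `K_∞`, sending `t` to `X⁻¹`. -/
def polC (x : Polynomial Fq) : LaurentSeries Fq :=
  Polynomial.aeval (HahnSeries.single (-1 : ℤ) (1 : Fq)) x

/-- `|x| = q^(deg x)` for `x ∈ F_q[t]` (with `|0| = 0`). -/
def fabsP (x : Polynomial Fq) : ℝ :=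
  if x = 0 then 0 else (Fintype.card Fq : ℝ) ^ x.natDegree

/-- The standard additive character `ψ(α) = e(Tr_{F_q/F_p}(α_{-1})/p)` of `K_∞`,
where `α_{-1}` is the coefficient of `t⁻¹` in the Laurent expansion of `α`. -/
def psi (p : ℕ) [CharP Fq p] (α : LaurentSeries Fq) : ℂ :=
  letI := ZMod.algebra Fq p
  Complex.exp (2 * Real.pi * Complex.I *
    ((Algebra.trace (ZMod p) Fq (α.coeff 1)).val : ℂ) / p)

/-! ### Auxiliary development for the Hua counting bound -/

open Polynomial UniqueFactorizationMonoid

set_option linter.unusedSectionVars false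
set_option linter.unusedVariables false

abbrev φHua : Polynomial Fq →+* RatFunc Fq := algebraMap _ _

lemma φHua_inj : Function.Injective (φHua Fq) := IsFractionRing.injective _ _

/-- The finset of polynomials of (nat)degree at most `D`. -/
def Ppoly (D : ℕ) : Finset (Polynomial Fq) :=
  (Finset.univ : Finset (Fin (D+1) → Fq)).image fun c =>
    ∑ i : Fin (D+1), Polynomial.C (c i) * Polynomial.X ^ (i : ℕ)

lemma mem_Ppoly {D : ℕ} {f : Polynomial Fq} : f ∈ Ppoly Fq D ↔ f.natDegree ≤ D := by
  constructor
  · rintro h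
    simp only [Ppoly, Finset.mem_image] at h
    obtain ⟨c, -, rfl⟩ := h
    refine (Polynomial.natDegree_sum_le _ _).trans ?_
    simp only [Finset.fold_max_le]
    refine ⟨by omega, fun i _ => ?_⟩
    exact (Polynomial.natDegree_C_mul_le _ _).trans (by simp [Polynomial.natDegree_X_pow]; omega)
  · intro h
    simp only [Ppoly, Finset.mem_image]
    refine ⟨fun i => f.coeff i, Finset.mem_univ _, ?_⟩
    rw [Fin.sum_univ_eq_sum_range (fun i => Polynomial.C (f.coeff i) * Polynomial.X ^ i)]
    conv_rhs => rw [f.as_sum_range' (D+1) (by omega)]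
    simp [Polynomial.C_mul_X_pow_eq_monomial]

lemma card_Ppoly (D : ℕ) : (Ppoly Fq D).card ≤ Fintype.card Fq ^ (D+1) := by
  refine (Finset.card_image_le).trans ?_
  simp [Fintype.card_fun]

lemma Ppoly_nonempty (D : ℕ) : 1 ≤ (Ppoly Fq D).card := by
  rw [Nat.one_le_iff_ne_zero, ← Nat.pos_iff_ne_zero, Finset.card_pos]
  exact ⟨0, (mem_Ppoly Fq).2 (by simp)⟩

/-- cube-root counting -/
lemma cube_fiber_le (T : Finset (Polynomial Fq)) (β v : RatFunc Fq) (hβ : β ≠ 0) :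
    (T.filter fun x => β * (φHua Fq x) ^ 3 = v).card ≤ 3 := by
  classical
  set p : Polynomial (RatFunc Fq) := Polynomial.C β * Polynomial.X ^ 3 - Polynomial.C v with hp
  have hp0 : p ≠ 0 := by
    intro h
    have : p.coeff 3 = 0 := by rw [h]; simp
    simp [hp, Polynomial.coeff_X_pow] at this
    exact hβ this
  have hdeg : p.natDegree ≤ 3 := by
    refine (Polynomial.natDegree_sub_le _ _).trans ?_
    simp [Polynomial.natDegree_C, Polynomial.natDegree_X_pow]
    exact (Polynomial.natDegree_C_mul_le _ _).trans (by simp)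
  have : (T.filter fun x => β * (φHua Fq x) ^ 3 = v).card ≤ p.roots.toFinset.card := by
    apply Finset.card_le_card_of_injOn (fun x => φHua Fq x)
    · intro x hx
      simp only [Finset.mem_coe, Finset.mem_filter] at hx
      simp only [Multiset.mem_toFinset, Polynomial.mem_roots hp0]
      simpa [hp, Polynomial.IsRoot, hx.2] using hp0
    · intro x _ y _ h; exact φHua_inj Fq h
  refine this.trans ?_
  refine (p.roots.toFinset_card_le).trans ?_
  exact (Polynomial.card_roots' p).trans hdeg

/-- quadratic-root counting -/
lemma quad_fiber_le (T : Finset (Polynomial Fq)) (A B Cc : RatFunc Fq) (hA : A ≠ 0) :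
    (T.filter fun x => A * (φHua Fq x) ^ 2 + B * (φHua Fq x) + Cc = 0).card ≤ 2 := by
  classical
  set p : Polynomial (RatFunc Fq) := Polynomial.C A * Polynomial.X ^ 2 +
    Polynomial.C B * Polynomial.X + Polynomial.C Cc with hp
  have hp0 : p ≠ 0 := by
    intro h
    have : p.coeff 2 = 0 := by rw [h]; simp
    simp [hp, Polynomial.coeff_X_pow, Polynomial.coeff_C] at this
    exact hA this
  have hdeg : p.natDegree ≤ 2 := by
    refine (Polynomial.natDegree_add_le _ _).trans ?_
    simp only [max_le_iff]
    refine ⟨(Polynomial.natDegree_add_le _ _).trans ?_, (Polynomial.natDegree_C _).le.trans (by omega)⟩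
    simp only [max_le_iff]
    exact ⟨(Polynomial.natDegree_C_mul_le _ _).trans (by simp),
      (Polynomial.natDegree_C_mul_le _ _).trans (by simp)⟩
  have : (T.filter fun x => A * (φHua Fq x) ^ 2 + B * (φHua Fq x) + Cc = 0).card ≤
      p.roots.toFinset.card := by
    apply Finset.card_le_card_of_injOn (fun x => φHua Fq x)
    · intro x hx
      simp only [Finset.mem_coe, Finset.mem_filter] at hx
      simp only [Multiset.mem_toFinset, Polynomial.mem_roots hp0]
      simpa [hp, Polynomial.IsRoot, hx.2] using hp0
    · intro x _ y _ h; exact φHua_inj Fq h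
  refine this.trans ((p.roots.toFinset_card_le).trans ((Polynomial.card_roots' p).trans hdeg))

/-- divisors of `n`, as a finset -/
def Dset (n : Polynomial Fq) : Finset (Polynomial Fq) :=
  (Ppoly Fq n.natDegree).filter (· ∣ n)

lemma mem_Dset {n d : Polynomial Fq} (hn : n ≠ 0) : d ∈ Dset Fq n ↔ d ∣ n := by
  simp only [Dset, Finset.mem_filter, mem_Ppoly, and_iff_right_iff_imp]
  exact fun h => Polynomial.natDegree_le_natDegree (Polynomial.degree_le_of_dvd h hn)

lemma card_Dset_le_prod {n : Polynomial Fq} (hn : n ≠ 0) :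
    (Dset Fq n).card ≤ Fintype.card Fq *
      ∏ p ∈ (normalizedFactors n).toFinset, ((normalizedFactors n).count p + 1) := by
  classical
  set M := normalizedFactors n with hM
  set S := M.toFinset with hS
  have key : (Dset Fq n).card ≤ Fintype.card (Fq × (∀ p : S, Fin (M.count ↑p + 1))) := by
    have hcount : ∀ d ∈ Dset Fq n, ∀ p : S, (normalizedFactors d).count ↑p < M.count ↑p + 1 := by
      intro d hd p
      have hdvd : d ∣ n := (mem_Dset Fq hn).1 hd
      have hd0 : d ≠ 0 := fun h => hn (by simpa [h] using hdvd)
      have hle : normalizedFactors d ≤ M :=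
        (dvd_iff_normalizedFactors_le_normalizedFactors hd0 hn).1 hdvd
      exact Nat.lt_succ_of_le (Multiset.le_iff_count.1 hle _)
    rw [← Fintype.card_coe (Dset Fq n)]
    apply Fintype.card_le_of_injective
      (fun d => (Polynomial.leadingCoeff d.1,
        fun p => ⟨(normalizedFactors d.1).count ↑p, hcount d.1 d.2 p⟩))
    rintro ⟨d, hd⟩ ⟨d', hd'⟩ heq
    simp only [Prod.mk.injEq, funext_iff, Fin.mk.injEq, Subtype.forall] at heq
    obtain ⟨hlc, hcnt⟩ := heq
    have hdvd : d ∣ n := (mem_Dset Fq hn).1 hd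
    have hdvd' : d' ∣ n := (mem_Dset Fq hn).1 hd'
    have hd0 : d ≠ 0 := fun h => hn (by simpa [h] using hdvd)
    have hd0' : d' ≠ 0 := fun h => hn (by simpa [h] using hdvd')
    have hle : normalizedFactors d ≤ M :=
      (dvd_iff_normalizedFactors_le_normalizedFactors hd0 hn).1 hdvd
    have hle' : normalizedFactors d' ≤ M :=
      (dvd_iff_normalizedFactors_le_normalizedFactors hd0' hn).1 hdvd'
    have hNF : normalizedFactors d = normalizedFactors d' := by
      ext p
      by_cases hp : p ∈ S
      · exact hcnt p hp
      · have h0 : M.count p = 0 :=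
          Multiset.count_eq_zero_of_notMem (fun hmem => hp (Multiset.mem_toFinset.2 hmem))
        have := Multiset.le_iff_count.1 hle p
        have := Multiset.le_iff_count.1 hle' p
        omega
    have hassoc : Associated d d' :=
      ((prod_normalizedFactors hd0).symm.trans (by rw [hNF]; exact prod_normalizedFactors hd0'))
    obtain ⟨u, hu⟩ := hassoc
    obtain ⟨r, hr, hru⟩ := Polynomial.isUnit_iff.1 u.isUnit
    have : d' = d * Polynomial.C r := by rw [← hu, hru]
    have hlc' : d'.leadingCoeff = d.leadingCoeff * r := by
      rw [this, Polynomial.leadingCoeff_mul, Polynomial.leadingCoeff_C]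
    have hr1 : r = 1 := by
      rw [hlc] at hlc'
      rcases (mul_right_eq_self₀).1 hlc'.symm with h | h
      · exact h
      · exact absurd h (Polynomial.leadingCoeff_ne_zero.2 hd0')
    ext1
    simp [this, hr1]
  refine key.trans ?_
  rw [Fintype.card_prod, Fintype.card_pi]
  simp only [Fintype.card_fin]
  apply Nat.mul_le_mul_left
  rw [← Finset.prod_attach S fun p => M.count p + 1]
  exact le_refl _

lemma natDegree_eq_of_assoc {d d' : Polynomial Fq} (hd : d ≠ 0) (h : Associated d d') :
    d.natDegree = d'.natDegree := by
  obtain ⟨u, hu⟩ := h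
  obtain ⟨r, hr, hru⟩ := Polynomial.isUnit_iff.1 u.isUnit
  have hr0 : r ≠ 0 := hr.ne_zero
  rw [← hu, ← hru, Polynomial.natDegree_mul hd (by simpa using hr0), Polynomial.natDegree_C,
    Nat.add_zero]

lemma degsum_eq {n : Polynomial Fq} (hn : n ≠ 0) :
    ∑ p ∈ (normalizedFactors n).toFinset,
      (normalizedFactors n).count p * p.natDegree = n.natDegree := by
  classical
  have h0 : (0 : Polynomial Fq) ∉ normalizedFactors n := zero_notMem_normalizedFactors n
  have h1 : (normalizedFactors n).prod.natDegree = n.natDegree :=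
    natDegree_eq_of_assoc Fq (Multiset.prod_ne_zero h0) (prod_normalizedFactors hn)
  rw [← h1, Polynomial.natDegree_multiset_prod _ h0, Finset.sum_multiset_map_count]
  simp [smul_eq_mul]

lemma two_le_q : (2 : ℝ) ≤ (Fintype.card Fq : ℝ) := by
  exact_mod_cast Fintype.one_lt_card

/-- arithmetic: c+1 ≤ B · 2^(εc) with B = 1 + 1/(ε log 2) -/
lemma count_le_aux (ε : ℝ) (hε : 0 < ε) (c : ℕ) :
    (c + 1 : ℝ) ≤ (1 + 1/(ε * Real.log 2)) * (2:ℝ) ^ (ε * c) := by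
  set L : ℝ := ε * Real.log 2 with hL
  have hL0 : 0 < L := mul_pos hε (Real.log_pos (by norm_num))
  have h2 : (2:ℝ) ^ (ε * c) = Real.exp ((c : ℝ) * L) := by
    rw [Real.rpow_def_of_pos (by norm_num : (0:ℝ) < 2), hL]; ring_nf
  have h3 : (c : ℝ) * L + 1 ≤ Real.exp ((c : ℝ) * L) := Real.add_one_le_exp _
  have hB0 : (0:ℝ) ≤ 1 + 1/L := by positivity
  have expand : (1 + 1/L) * ((c:ℝ)*L + 1) = (c:ℝ)*L + 1 + (c:ℝ) + 1/L := by
    field_simp; ring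
  have step : (1 + 1/L) * ((c:ℝ)*L + 1) ≤ (1 + 1/L) * Real.exp ((c : ℝ) * L) :=
    mul_le_mul_of_nonneg_left h3 hB0
  rw [h2]
  have h1L : 0 < 1/L := by positivity
  have hcL : 0 ≤ (c:ℝ)*L := by positivity
  linarith [expand ▸ step]

lemma prod_count_bound (ε : ℝ) (hε : 0 < ε) :
    ∃ C : ℝ, 1 ≤ C ∧ ∀ (S : Finset (Polynomial Fq)) (c : Polynomial Fq → ℕ),
      (∀ p ∈ S, 1 ≤ p.natDegree) →
      (∏ p ∈ S, ((c p + 1 : ℕ) : ℝ)) ≤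
        C * ((Fintype.card Fq : ℝ) ^ ε) ^ (∑ p ∈ S, c p * p.natDegree) := by
  classical
  have hq2 : (2:ℝ) ≤ (Fintype.card Fq : ℝ) := two_le_q Fq
  have hq0 : (0:ℝ) ≤ (Fintype.card Fq : ℝ) := by linarith
  obtain ⟨K, hεK⟩ : ∃ K : ℕ, 1 ≤ ε * K := by
    refine ⟨⌈1/ε⌉₊ + 1, ?_⟩
    have h1 : (1/ε : ℝ) ≤ ⌈1/ε⌉₊ := Nat.le_ceil _
    have := (div_le_iff₀ hε).1 h1
    push_cast; nlinarith
  set B : ℝ := 1 + 1/(ε * Real.log 2) with hB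
  have hL0 : 0 < ε * Real.log 2 := mul_pos hε (Real.log_pos (by norm_num))
  have hB1 : 1 ≤ B := le_add_of_nonneg_right (by positivity)
  refine ⟨B ^ (Fintype.card Fq ^ (K+1)), one_le_pow₀ hB1, ?_⟩
  intro S c hdeg
  set x : ℝ := (Fintype.card Fq : ℝ) ^ ε with hx
  have hx1 : (1:ℝ) ≤ x := Real.one_le_rpow (by linarith) hε.le
  have hx0 : (0:ℝ) ≤ x := by linarith
  have hxpow : ∀ m : ℕ, x ^ m = (Fintype.card Fq : ℝ) ^ (ε * m) := fun m => by
    rw [hx, ← Real.rpow_natCast ((Fintype.card Fq:ℝ) ^ ε) m, ← Real.rpow_mul hq0]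
  have point : ∀ p ∈ S, ((c p + 1 : ℕ) : ℝ) ≤
      (if p.natDegree ≤ K then B else 1) * x ^ (c p * p.natDegree) := by
    intro p hp
    have hd1 : 1 ≤ p.natDegree := hdeg p hp
    have hd1' : (1:ℝ) ≤ (p.natDegree : ℝ) := by exact_mod_cast hd1
    have hc0 : (0:ℝ) ≤ (c p : ℝ) := Nat.cast_nonneg _
    by_cases hsmall : p.natDegree ≤ K
    · rw [if_pos hsmall]
      have key1 : ((c p + 1 : ℕ) : ℝ) ≤ B * (2:ℝ) ^ (ε * c p) := by
        push_cast; exact count_le_aux ε hε (c p)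
      refine key1.trans (mul_le_mul_of_nonneg_left ?_ (by linarith : (0:ℝ) ≤ B))
      rw [hxpow]
      calc (2:ℝ) ^ (ε * c p) ≤ (Fintype.card Fq : ℝ) ^ (ε * c p) :=
            Real.rpow_le_rpow (by norm_num) hq2 (by positivity)
        _ ≤ (Fintype.card Fq : ℝ) ^ (ε * (c p * p.natDegree : ℕ)) := by
            apply Real.rpow_le_rpow_of_exponent_le (by linarith)
            push_cast
            exact mul_le_mul_of_nonneg_left (by nlinarith) hε.le
    · rw [if_neg hsmall, one_mul]
      have hKd : 1 ≤ ε * (p.natDegree : ℝ) := by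
        have h' : (K:ℝ) ≤ (p.natDegree : ℝ) := by exact_mod_cast (Nat.not_le.mp hsmall).le
        nlinarith
      have step1 : ((c p + 1 : ℕ) : ℝ) ≤ (2:ℝ) ^ ((c p : ℕ) : ℝ) := by
        rw [Real.rpow_natCast]
        exact_mod_cast Nat.succ_le_of_lt (Nat.lt_two_pow_self (n := c p))
      refine step1.trans ?_
      rw [hxpow]
      calc (2:ℝ) ^ ((c p : ℕ) : ℝ) ≤ (2:ℝ) ^ (ε * (c p * p.natDegree : ℕ)) := by
            apply Real.rpow_le_rpow_of_exponent_le (by norm_num)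
            push_cast
            nlinarith
        _ ≤ (Fintype.card Fq : ℝ) ^ (ε * (c p * p.natDegree : ℕ)) :=
            Real.rpow_le_rpow (by norm_num) hq2 (by positivity)
  calc (∏ p ∈ S, ((c p + 1 : ℕ) : ℝ))
      ≤ ∏ p ∈ S, (if p.natDegree ≤ K then B else 1) * x ^ (c p * p.natDegree) :=
        Finset.prod_le_prod (fun p _ => by positivity) point
    _ = (∏ p ∈ S, (if p.natDegree ≤ K then B else 1)) * ∏ p ∈ S, x ^ (c p * p.natDegree) :=
        Finset.prod_mul_distrib
    _ ≤ B ^ (Fintype.card Fq ^ (K+1)) * x ^ (∑ p ∈ S, c p * p.natDegree) := by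
        apply mul_le_mul
        · rw [← Finset.prod_filter (fun p : Polynomial Fq => p.natDegree ≤ K) (fun _ => B),
            Finset.prod_const]
          apply pow_le_pow_right₀ hB1
          refine le_trans (Finset.card_le_card ?_) (card_Ppoly Fq K)
          intro f hf
          simp only [Finset.mem_filter] at hf
          exact (mem_Ppoly Fq).2 hf.2
        · rw [Finset.prod_pow_eq_pow_sum]
        · positivity
        · positivity

/-- The divisor bound over `F_q[t]`. -/
lemma divisor_bound (ε : ℝ) (hε : 0 < ε) :
    ∃ C : ℝ, 1 ≤ C ∧ ∀ n : Polynomial Fq, n ≠ 0 →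
      ((Dset Fq n).card : ℝ) ≤ C * ((Fintype.card Fq : ℝ) ^ ε) ^ n.natDegree := by
  classical
  obtain ⟨C0, hC0, hbound⟩ := prod_count_bound Fq ε hε
  have hq1 : (1:ℝ) ≤ (Fintype.card Fq : ℝ) := by linarith [two_le_q Fq]
  refine ⟨(Fintype.card Fq : ℝ) * C0, one_le_mul_of_one_le_of_one_le hq1 hC0, ?_⟩
  intro n hn
  have h1 : ((Dset Fq n).card : ℝ) ≤ (Fintype.card Fq : ℝ) *
      ∏ p ∈ (normalizedFactors n).toFinset, (((normalizedFactors n).count p + 1 : ℕ) : ℝ) := by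
    rw [← Nat.cast_prod]
    exact_mod_cast card_Dset_le_prod Fq hn
  refine h1.trans ?_
  rw [mul_assoc]
  apply mul_le_mul_of_nonneg_left _ (by linarith)
  have hdeg : ∀ p ∈ (normalizedFactors n).toFinset, 1 ≤ p.natDegree := by
    intro p hp
    exact (irreducible_of_normalized_factor p (Multiset.mem_toFinset.1 hp)).natDegree_pos
  have := hbound (normalizedFactors n).toFinset (fun p => (normalizedFactors n).count p) hdeg
  rwa [degsum_eq Fq hn] at this

variable {Fq}

lemma three_ne (hchar : 3 < ringChar Fq) : (3 : RatFunc Fq) ≠ 0 := by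
  intro h
  have h3 : ((3:ℕ) : Fq) ≠ 0 := by
    intro h0
    have := (CharP.cast_eq_zero_iff Fq (ringChar Fq) 3).1 h0
    have := Nat.le_of_dvd (by norm_num) this
    omega
  apply h3
  have h5 : (algebraMap Fq (RatFunc Fq)) ((3:ℕ) : Fq) = ((3:ℕ) : RatFunc Fq) := map_natCast _ 3
  have h' : (algebraMap Fq (RatFunc Fq)) ((3:ℕ) : Fq) = 0 := by
    rw [h5]; exact_mod_cast h
  exact (map_eq_zero_iff _ (FaithfulSMul.algebraMap_injective Fq (RatFunc Fq))).1 h'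

def PairF (α β : RatFunc Fq) (p : Polynomial Fq × Polynomial Fq) : RatFunc Fq :=
  α * (φHua Fq p.1) ^ 3 + β * (φHua Fq p.2) ^ 3

def PairSet (α β : RatFunc Fq) (D : ℕ) (v : RatFunc Fq) :
    Finset (Polynomial Fq × Polynomial Fq) :=
  (Ppoly Fq D ×ˢ Ppoly Fq D).filter fun p => PairF α β p = v

/-- The Hua quadruple set. -/
def QuadSet (α β : RatFunc Fq) (D : ℕ) :
    Finset ((Polynomial Fq × Polynomial Fq) × (Polynomial Fq × Polynomial Fq)) :=
  ((Ppoly Fq D ×ˢ Ppoly Fq D) ×ˢ (Ppoly Fq D ×ˢ Ppoly Fq D)).filter fun z =>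
    PairF α β z.1 = PairF α β z.2

/-- Case A: x³ = x'³. -/
lemma quad_caseA (α β : RatFunc Fq) (hα : α ≠ 0) (hβ : β ≠ 0) (D : ℕ) :
    ((QuadSet α β D).filter fun z => z.1.1 ^ 3 = z.2.1 ^ 3).card ≤ 9 * (Ppoly Fq D).card ^ 2 := by
  classical
  set T := (QuadSet α β D).filter fun z => z.1.1 ^ 3 = z.2.1 ^ 3 with hT
  have h := Finset.card_eq_sum_card_fiberwise
    (f := fun z : (Polynomial Fq × Polynomial Fq) × (Polynomial Fq × Polynomial Fq) => z.1)
    (s := T) (t := Ppoly Fq D ×ˢ Ppoly Fq D) ?memb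
  · rw [h]
    have : ∀ p ∈ Ppoly Fq D ×ˢ Ppoly Fq D,
        (T.filter fun z => z.1 = p).card ≤ 9 := by
      intro p hp
      have hle : (T.filter fun z => z.1 = p).card ≤
          (((Ppoly Fq D).filter fun x' => (1:RatFunc Fq) * (φHua Fq x') ^ 3 = (φHua Fq p.1) ^ 3) ×ˢ
           ((Ppoly Fq D).filter fun y' => (1:RatFunc Fq) * (φHua Fq y') ^ 3 = (φHua Fq p.2) ^ 3)).card := by
        apply Finset.card_le_card_of_injOn (fun z => z.2)
        · intro z hz
          simp only [hT, QuadSet, Finset.mem_coe, Finset.mem_filter, Finset.mem_product] at hz ⊢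
          simp only [PairF] at hz ⊢
          obtain ⟨⟨⟨⟨⟨hx, hy⟩, hx', hy'⟩, heq⟩, hcube⟩, hz1⟩ := hz
          subst hz1
          have hcubeφ : (φHua Fq z.2.1) ^ 3 = (φHua Fq z.1.1) ^ 3 := by
            rw [← map_pow, ← map_pow, hcube]
          refine ⟨⟨hx', by rw [one_mul, hcubeφ]⟩, ⟨hy', ?_⟩⟩
          rw [one_mul]
          have : β * (φHua Fq z.2.2) ^ 3 = β * (φHua Fq z.1.2) ^ 3 := by
            linear_combination (-1 : RatFunc Fq) * heq - α * hcubeφ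
          exact mul_left_cancel₀ hβ this
        · intro z hz w hw h2
          simp only [hT, Finset.mem_coe, Finset.mem_filter] at hz hw
          have : z.1 = w.1 := by rw [hz.2, hw.2]
          exact Prod.ext this h2
      refine hle.trans ?_
      rw [Finset.card_product]
      have c1 := cube_fiber_le Fq (Ppoly Fq D) 1 ((φHua Fq p.1) ^ 3) one_ne_zero
      have c2 := cube_fiber_le Fq (Ppoly Fq D) 1 ((φHua Fq p.2) ^ 3) one_ne_zero
      nlinarith
    calc ∑ p ∈ Ppoly Fq D ×ˢ Ppoly Fq D, (T.filter fun z => z.1 = p).card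
        ≤ ∑ _p ∈ Ppoly Fq D ×ˢ Ppoly Fq D, 9 := Finset.sum_le_sum this
      _ = 9 * (Ppoly Fq D).card ^ 2 := by
          rw [Finset.sum_const, Finset.card_product]; ring
  · intro z hz
    simp only [hT, QuadSet, Finset.mem_coe, Finset.mem_filter, Finset.mem_product] at hz
    exact Finset.mem_product.2 ⟨hz.1.1.1.1, hz.1.1.1.2⟩

lemma quad_caseB (hchar : 3 < ringChar Fq) (α β : RatFunc Fq) (hα : α ≠ 0) (hβ : β ≠ 0)
    (D : ℕ) (Λ : ℕ)
    (hdiv : ∀ n : Polynomial Fq, n ≠ 0 → n.natDegree ≤ 3*D → (Dset Fq n).card ≤ Λ) :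
    ((QuadSet α β D).filter fun z => ¬ (z.1.1 ^ 3 = z.2.1 ^ 3)).card
      ≤ 2 * Λ * (Ppoly Fq D).card ^ 2 := by
  classical
  have h3 : (3 : RatFunc Fq) ≠ 0 := three_ne hchar
  set T := (QuadSet α β D).filter fun z => ¬ (z.1.1 ^ 3 = z.2.1 ^ 3) with hT
  have hmemb : ∀ z ∈ T,
      (fun z : (Polynomial Fq × Polynomial Fq) × (Polynomial Fq × Polynomial Fq) =>
        (z.1.2, z.2.2)) z ∈ Ppoly Fq D ×ˢ Ppoly Fq D := by
    intro z hz
    simp only [hT, QuadSet, Finset.mem_filter, Finset.mem_product] at hz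
    exact Finset.mem_product.2 ⟨hz.1.1.1.2, hz.1.1.2.2⟩
  rw [Finset.card_eq_sum_card_fiberwise hmemb]
  have key : ∀ p ∈ Ppoly Fq D ×ˢ Ppoly Fq D,
      (T.filter fun z => (z.1.2, z.2.2) = p).card ≤ 2 * Λ := by
    intro p hp
    set Fp := T.filter fun z => (z.1.2, z.2.2) = p with hFp
    rcases Finset.eq_empty_or_nonempty Fp with hem | ⟨z₀, hz₀⟩
    · rw [hem]; simp
    have hz₀' := hz₀
    simp only [hFp, hT, QuadSet, Finset.mem_filter, Finset.mem_product] at hz₀'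
    simp only [PairF] at hz₀'
    obtain ⟨⟨⟨⟨⟨hx₀, hy₀⟩, hx₀', hy₀'⟩, heq₀⟩, hne₀⟩, hyy₀⟩ := hz₀'
    set n : Polynomial Fq := z₀.1.1 ^ 3 - z₀.2.1 ^ 3 with hn
    have hn0 : n ≠ 0 := sub_ne_zero_of_ne hne₀
    have hndeg : n.natDegree ≤ 3 * D := by
      refine (Polynomial.natDegree_sub_le _ _).trans ?_
      rw [Polynomial.natDegree_pow, Polynomial.natDegree_pow]
      have := (mem_Ppoly Fq).1 hx₀
      have := (mem_Ppoly Fq).1 hx₀'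
      simp only [max_le_iff]
      omega
    have hsame : ∀ z ∈ Fp, z.1.1 ^ 3 - z.2.1 ^ 3 = n := by
      intro z hz
      simp only [hFp, hT, QuadSet, Finset.mem_filter, Finset.mem_product] at hz
      simp only [PairF] at hz
      obtain ⟨⟨⟨-, heq⟩, hne⟩, hyy⟩ := hz
      have hyz : (z.1.2, z.2.2) = (z₀.1.2, z₀.2.2) := hyy.trans hyy₀.symm
      have hy1 : z.1.2 = z₀.1.2 := (Prod.ext_iff.1 hyz).1
      have hy2 : z.2.2 = z₀.2.2 := (Prod.ext_iff.1 hyz).2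
      apply φHua_inj Fq
      rw [map_sub, map_pow, map_pow, hn, map_sub, map_pow, map_pow]
      rw [hy1, hy2] at heq
      exact mul_left_cancel₀ hα (by linear_combination heq - heq₀)
    have hmemb2 : ∀ z ∈ Fp,
        (fun z : (Polynomial Fq × Polynomial Fq) × (Polynomial Fq × Polynomial Fq) =>
          z.1.1 - z.2.1) z ∈ Dset Fq n := by
      intro z hz
      have hzn := hsame z hz
      rw [mem_Dset Fq hn0, ← hzn]
      exact ⟨z.1.1^2 + z.1.1 * z.2.1 + z.2.1^2, by ring⟩
    rw [Finset.card_eq_sum_card_fiberwise hmemb2]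
    have inner : ∀ u ∈ Dset Fq n,
        (Fp.filter fun z => z.1.1 - z.2.1 = u).card ≤ 2 := by
      intro u hu
      have hu0 : u ≠ 0 := by
        intro h0
        have := (mem_Dset Fq hn0).1 hu
        rw [h0] at this
        exact hn0 (zero_dvd_iff.1 this)
      have hφu : φHua Fq u ≠ 0 := fun hh => hu0 (φHua_inj Fq (by simpa using hh))
      have hA : 3 * α * φHua Fq u ≠ 0 := mul_ne_zero (mul_ne_zero h3 hα) hφu
      refine le_trans (Finset.card_le_card_of_injOn (fun z => z.1.1) ?_ ?_)
        (quad_fiber_le Fq (Ppoly Fq D) (3 * α * φHua Fq u) (-(3 * α * (φHua Fq u)^2))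
          (α * (φHua Fq u)^3 + β * (φHua Fq p.1)^3 - β * (φHua Fq p.2)^3) hA)
      · intro z hz
        simp only [Finset.mem_coe, Finset.mem_filter] at hz
        obtain ⟨hzFp, hzu⟩ := hz
        simp only [hFp, hT, QuadSet, Finset.mem_filter, Finset.mem_product] at hzFp
        simp only [PairF] at hzFp
        obtain ⟨⟨⟨⟨⟨hx, hy⟩, hx', hy'⟩, heq⟩, hne⟩, hyy⟩ := hzFp
        have hy1 : z.1.2 = p.1 := by rw [← hyy]
        have hy2 : z.2.2 = p.2 := by rw [← hyy]
        have hx'u : z.2.1 = z.1.1 - u := by rw [← hzu]; ring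
        have hφx' : φHua Fq z.2.1 = φHua Fq z.1.1 - φHua Fq u := by rw [hx'u, map_sub]
        simp only [Finset.mem_coe, Finset.mem_filter]
        refine ⟨hx, ?_⟩
        rw [hy1, hy2, hφx'] at heq
        linear_combination heq
      · intro z hz w hw hzw
        simp only [Finset.mem_coe, Finset.mem_filter] at hz hw
        obtain ⟨hzFp, hzu⟩ := hz
        obtain ⟨hwFp, hwu⟩ := hw
        simp only [hFp, hT, QuadSet, Finset.mem_filter, Finset.mem_product] at hzFp hwFp
        have hzx' : z.2.1 = z.1.1 - u := by rw [← hzu]; ring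
        have hwx' : w.2.1 = w.1.1 - u := by rw [← hwu]; ring
        have hyz : (z.1.2, z.2.2) = (w.1.2, w.2.2) := hzFp.2.trans hwFp.2.symm
        have hxx : z.1.1 = w.1.1 := hzw
        refine Prod.ext (Prod.ext hxx (Prod.ext_iff.1 hyz).1)
          (Prod.ext ?_ (Prod.ext_iff.1 hyz).2)
        rw [hzx', hwx', hxx]
    calc ∑ u ∈ Dset Fq n, (Fp.filter fun z => z.1.1 - z.2.1 = u).card
        ≤ ∑ _u ∈ Dset Fq n, 2 := Finset.sum_le_sum inner
      _ = (Dset Fq n).card * 2 := by rw [Finset.sum_const, smul_eq_mul]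
      _ ≤ 2 * Λ := by have := hdiv n hn0 hndeg; omega
  calc ∑ p ∈ Ppoly Fq D ×ˢ Ppoly Fq D, (T.filter fun z => (z.1.2, z.2.2) = p).card
      ≤ ∑ _p ∈ Ppoly Fq D ×ˢ Ppoly Fq D, 2 * Λ := Finset.sum_le_sum key
    _ = 2 * Λ * (Ppoly Fq D).card ^ 2 := by
        rw [Finset.sum_const, Finset.card_product, smul_eq_mul]; ring

lemma quad_total (hchar : 3 < ringChar Fq) (α β : RatFunc Fq) (hα : α ≠ 0) (hβ : β ≠ 0)
    (D : ℕ) (Λ : ℕ)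
    (hdiv : ∀ n : Polynomial Fq, n ≠ 0 → n.natDegree ≤ 3*D → (Dset Fq n).card ≤ Λ) :
    (QuadSet α β D).card ≤ (9 + 2 * Λ) * (Ppoly Fq D).card ^ 2 := by
  classical
  have hsplit := Finset.card_filter_add_card_filter_not
    (s := QuadSet α β D) (p := fun z => z.1.1 ^ 3 = z.2.1 ^ 3)
  have hA := quad_caseA α β hα hβ D
  have hB := quad_caseB hchar α β hα hβ D Λ hdiv
  have expand : (9 + 2 * Λ) * (Ppoly Fq D).card ^ 2
      = 9 * (Ppoly Fq D).card ^ 2 + 2 * Λ * (Ppoly Fq D).card ^ 2 := by ring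
  omega

/-- sum of squared fiber-counts equals the quad count -/
lemma sum_sq_eq_quad (α β : RatFunc Fq) (D : ℕ) :
    ∑ v ∈ (Ppoly Fq D ×ˢ Ppoly Fq D).image (PairF α β),
      (PairSet α β D v).card ^ 2 = (QuadSet α β D).card := by
  classical
  have hmemb : ∀ z ∈ QuadSet α β D,
      PairF α β z.1 ∈ (Ppoly Fq D ×ˢ Ppoly Fq D).image (PairF α β) := by
    intro z hz
    simp only [QuadSet, Finset.mem_filter] at hz
    exact Finset.mem_image_of_mem _ (Finset.mem_product.2
      ⟨(Finset.mem_product.1 (Finset.mem_product.1 hz.1).1).1,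
       (Finset.mem_product.1 (Finset.mem_product.1 hz.1).1).2⟩)
  rw [Finset.card_eq_sum_card_fiberwise hmemb]
  apply Finset.sum_congr rfl
  intro v hv
  have : (QuadSet α β D).filter (fun z => PairF α β z.1 = v) =
      (PairSet α β D v) ×ˢ (PairSet α β D v) := by
    ext z
    simp only [QuadSet, PairSet, Finset.mem_filter, Finset.mem_product]
    constructor
    · rintro ⟨⟨⟨h1, h2⟩, heq⟩, hv1⟩
      exact ⟨⟨h1, hv1⟩, ⟨h2, heq ▸ hv1⟩⟩
    · rintro ⟨⟨h1, hv1⟩, h2, hv2⟩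
      exact ⟨⟨⟨h1, h2⟩, hv1.trans hv2.symm⟩, hv1⟩
  rw [this, Finset.card_product, sq]

/-- the 4-variable count with arbitrary RHS, as pairs -/
def Sol4 (α₁ α₂ α₃ α₄ : RatFunc Fq) (D : ℕ) (c : RatFunc Fq) :
    Finset ((Polynomial Fq × Polynomial Fq) × (Polynomial Fq × Polynomial Fq)) :=
  ((Ppoly Fq D ×ˢ Ppoly Fq D) ×ˢ (Ppoly Fq D ×ˢ Ppoly Fq D)).filter fun z =>
    PairF α₁ α₂ z.1 + PairF α₃ α₄ z.2 = c

lemma sol4_le (α₁ α₂ α₃ α₄ : RatFunc Fq) (D : ℕ) (c : RatFunc Fq) :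
    2 * (Sol4 α₁ α₂ α₃ α₄ D c).card ≤
      (QuadSet α₁ α₂ D).card + (QuadSet α₃ α₄ D).card := by
  classical
  set V1 := (Ppoly Fq D ×ˢ Ppoly Fq D).image (PairF α₁ α₂) with hV1
  set V2 := (Ppoly Fq D ×ˢ Ppoly Fq D).image (PairF α₃ α₄) with hV2
  have hmemb : ∀ z ∈ Sol4 α₁ α₂ α₃ α₄ D c, PairF α₁ α₂ z.1 ∈ V1 := by
    intro z hz
    simp only [Sol4, Finset.mem_filter] at hz
    exact Finset.mem_image_of_mem _ (Finset.mem_product.1 hz.1).1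
  rw [Finset.card_eq_sum_card_fiberwise hmemb]
  have fib : ∀ v ∈ V1, ((Sol4 α₁ α₂ α₃ α₄ D c).filter fun z => PairF α₁ α₂ z.1 = v)
      = (PairSet α₁ α₂ D v) ×ˢ (PairSet α₃ α₄ D (c - v)) := by
    intro v hv
    ext z
    simp only [Sol4, PairSet, Finset.mem_filter, Finset.mem_product]
    constructor
    · rintro ⟨⟨⟨h1, h2⟩, heq⟩, hv1⟩
      refine ⟨⟨h1, hv1⟩, ⟨h2, ?_⟩⟩
      rw [← heq, hv1]; ring
    · rintro ⟨⟨h1, hv1⟩, h2, hv2⟩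
      refine ⟨⟨⟨h1, h2⟩, ?_⟩, hv1⟩
      rw [hv1, hv2]; ring
  have step1 : 2 * ∑ v ∈ V1, ((Sol4 α₁ α₂ α₃ α₄ D c).filter fun z => PairF α₁ α₂ z.1 = v).card
      ≤ ∑ v ∈ V1, (PairSet α₁ α₂ D v).card ^ 2 + ∑ v ∈ V1, (PairSet α₃ α₄ D (c - v)).card ^ 2 := by
    rw [Finset.mul_sum, ← Finset.sum_add_distrib]
    apply Finset.sum_le_sum
    intro v hv
    rw [fib v hv, Finset.card_product]
    nlinarith [sq_nonneg ((PairSet α₁ α₂ D v).card - (PairSet α₃ α₄ D (c-v)).card : ℤ)]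
  have step2 : ∑ v ∈ V1, (PairSet α₃ α₄ D (c - v)).card ^ 2
      ≤ ∑ w ∈ V2, (PairSet α₃ α₄ D w).card ^ 2 := by
    have hinj : ∀ x ∈ V1, ∀ y ∈ V1, c - x = c - y → x = y := by
      intro x _ y _ h
      exact sub_right_injective h
    have him : ∑ w ∈ V1.image (fun v => c - v), (PairSet α₃ α₄ D w).card ^ 2
        = ∑ v ∈ V1, (PairSet α₃ α₄ D (c - v)).card ^ 2 := Finset.sum_image hinj
    rw [← him]
    apply Finset.sum_le_sum_of_ne_zero
    intro w hw hne
    have hcard : (PairSet α₃ α₄ D w).card ≠ 0 := fun h => hne (by rw [h]; ring)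
    obtain ⟨p, hp⟩ := Finset.card_ne_zero.1 hcard
    simp only [PairSet, Finset.mem_filter] at hp
    exact Finset.mem_image.2 ⟨p, hp.1, hp.2⟩
  calc 2 * ∑ v ∈ V1, ((Sol4 α₁ α₂ α₃ α₄ D c).filter fun z => PairF α₁ α₂ z.1 = v).card
      ≤ ∑ v ∈ V1, (PairSet α₁ α₂ D v).card ^ 2
        + ∑ v ∈ V1, (PairSet α₃ α₄ D (c - v)).card ^ 2 := step1
    _ ≤ ∑ v ∈ V1, (PairSet α₁ α₂ D v).card ^ 2
        + ∑ w ∈ V2, (PairSet α₃ α₄ D w).card ^ 2 := by omega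
    _ = (QuadSet α₁ α₂ D).card + (QuadSet α₃ α₄ D).card := by
        rw [sum_sq_eq_quad, sum_sq_eq_quad]

def TupSet (s : ℕ) (a : Fin s → RatFunc Fq) (D : ℕ) (c : RatFunc Fq) :
    Finset (Fin s → Polynomial Fq) :=
  (Fintype.piFinset fun _ => Ppoly Fq D).filter fun e => ∑ i, a i * (φHua Fq (e i)) ^ 3 = c

lemma tup1_le (a : Fin 1 → RatFunc Fq) (ha : ∀ i, a i ≠ 0) (D : ℕ) (c : RatFunc Fq) :
    (TupSet 1 a D c).card ≤ 3 := by
  classical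
  refine le_trans (Finset.card_le_card_of_injOn (fun e => e 0) ?_ ?_)
    (cube_fiber_le Fq (Ppoly Fq D) (a 0) c (ha 0))
  · intro e he
    simp only [TupSet, Finset.mem_coe, Finset.mem_filter, Fintype.mem_piFinset] at he
    simp only [Finset.mem_coe, Finset.mem_filter]
    refine ⟨he.1 0, ?_⟩
    have := he.2
    rwa [Fin.sum_univ_one] at this
  · intro e he f hf h
    funext i
    have : i = 0 := Subsingleton.elim _ _
    rw [this]; exact h

lemma tup_succ_le (s : ℕ) (a : Fin (s+1) → RatFunc Fq) (D : ℕ) (c : RatFunc Fq) (Λ' : ℕ)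
    (ih : ∀ c', (TupSet s (fun i => a i.castSucc) D c').card ≤ Λ') :
    (TupSet (s+1) a D c).card ≤ (Ppoly Fq D).card * Λ' := by
  classical
  have hmemb : ∀ e ∈ TupSet (s+1) a D c, e (Fin.last s) ∈ Ppoly Fq D := by
    intro e he
    simp only [TupSet, Finset.mem_filter, Fintype.mem_piFinset] at he
    exact he.1 _
  rw [Finset.card_eq_sum_card_fiberwise hmemb]
  have key : ∀ w ∈ Ppoly Fq D,
      ((TupSet (s+1) a D c).filter fun e => e (Fin.last s) = w).card ≤ Λ' := by
    intro w hw
    refine le_trans (Finset.card_le_card_of_injOn (fun e => fun i : Fin s => e i.castSucc)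
      ?_ ?_) (ih (c - a (Fin.last s) * (φHua Fq w) ^ 3))
    · intro e he
      simp only [Finset.mem_coe, Finset.mem_filter, TupSet, Fintype.mem_piFinset] at he ⊢
      obtain ⟨⟨hmem, hsum⟩, hlast⟩ := he
      refine ⟨fun i => hmem _, ?_⟩
      rw [Fin.sum_univ_castSucc] at hsum
      rw [← hsum, hlast]; ring
    · intro e he f hf h
      simp only [Finset.mem_coe, Finset.mem_filter] at he hf
      funext i
      induction i using Fin.lastCases with
      | last => rw [he.2, hf.2]
      | cast j => exact congrFun h j
  calc ∑ w ∈ Ppoly Fq D, ((TupSet (s+1) a D c).filter fun e => e (Fin.last s) = w).card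
      ≤ ∑ _w ∈ Ppoly Fq D, Λ' := Finset.sum_le_sum key
    _ = (Ppoly Fq D).card * Λ' := by rw [Finset.sum_const, smul_eq_mul]

lemma tup4_le (a : Fin 4 → RatFunc Fq) (D : ℕ) (c : RatFunc Fq) :
    (TupSet 4 a D c).card ≤ (Sol4 (a 0) (a 1) (a 2) (a 3) D c).card := by
  classical
  apply Finset.card_le_card_of_injOn (fun e => ((e 0, e 1), (e 2, e 3)))
  · intro e he
    simp only [TupSet, Finset.mem_coe, Finset.mem_filter, Fintype.mem_piFinset] at he
    simp only [Sol4, Finset.mem_coe, Finset.mem_filter]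
    constructor
    · exact Finset.mem_product.2 ⟨Finset.mem_product.2 ⟨he.1 0, he.1 1⟩,
        Finset.mem_product.2 ⟨he.1 2, he.1 3⟩⟩
    · have := he.2
      rw [Fin.sum_univ_four] at this
      simp only [PairF]
      rw [← this]; ring
  · intro e he f hf h
    simp only [Prod.mk.injEq] at h
    funext i
    fin_cases i
    · exact h.1.1
    · exact h.1.2
    · exact h.2.1
    · exact h.2.2

variable (Fq)

set_option maxHeartbeats 1000000 in
/-- Hölder + Hua counting bound for diagonal cubics: if `char F_q > 3`,
`2 ≤ s ≤ 6` and `a₁,…,a_s ∈ F_q(t)ˣ`, then the number of `e ∈ F_q[t]^s` with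
`|e| ≤ E` and `Σ aᵢ eᵢ³ = 0` is `O_ε(E^{2+ε})` when `s ≤ 4` and
`O_ε(E^{s−2+ε})` when `5 ≤ s ≤ 6`. -/
theorem hua_counting_bound
    (hchar : 3 < ringChar Fq)
    (s : ℕ) (hs1 : 2 ≤ s) (hs2 : s ≤ 6)
    (a : Fin s → RatFunc Fq) (ha : ∀ i, a i ≠ 0)
    (ε : ℝ) (hε : 0 < ε) :
    ∃ C : ℝ, 0 < C ∧ ∀ E : ℝ, 1 ≤ E →
      (Nat.card {e : Fin s → Polynomial Fq //
          (∀ i, fabsP Fq (e i) ≤ E) ∧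
          ∑ i, a i * (algebraMap (Polynomial Fq) (RatFunc Fq) (e i)) ^ 3 = 0} : ℝ)
        ≤ C * E ^ ((if s ≤ 4 then (2 : ℝ) else (s : ℝ) - 2) + ε) := by
  classical
  have hq2 : (2:ℝ) ≤ (Fintype.card Fq : ℝ) := two_le_q Fq
  have hq0 : (0:ℝ) ≤ (Fintype.card Fq : ℝ) := by linarith
  have hq1 : (1:ℝ) ≤ (Fintype.card Fq : ℝ) := by linarith
  set ε' : ℝ := ε / 3 with hε'
  have hε'0 : 0 < ε' := by positivity
  obtain ⟨Cd, hCd1, hdivb⟩ := divisor_bound Fq ε' hε'0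
  refine ⟨11 * Cd * (Fintype.card Fq : ℝ) ^ (6:ℕ), by positivity, ?_⟩
  intro E hE
  have hE0 : (0:ℝ) < E := by linarith
  set D : ℕ := Nat.log (Fintype.card Fq) ⌊E⌋₊ with hD
  have hfl1 : 1 ≤ ⌊E⌋₊ := Nat.le_floor (by exact_mod_cast hE)
  have hqD : ((Fintype.card Fq : ℝ)) ^ D ≤ E := by
    have h1 : Fintype.card Fq ^ D ≤ ⌊E⌋₊ := Nat.pow_log_le_self _ (by omega)
    calc ((Fintype.card Fq : ℝ)) ^ D = ((Fintype.card Fq ^ D : ℕ) : ℝ) := by push_cast; ring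
      _ ≤ (⌊E⌋₊ : ℝ) := by exact_mod_cast h1
      _ ≤ E := Nat.floor_le (by linarith)
  have hqD1 : (1:ℝ) ≤ ((Fintype.card Fq : ℝ)) ^ D := one_le_pow₀ hq1
  -- membership
  have hdegle : ∀ e : Polynomial Fq, fabsP Fq e ≤ E → e ∈ Ppoly Fq D := by
    intro e he
    rw [mem_Ppoly]
    by_cases h0 : e = 0
    · simp [h0]
    · rw [fabsP, if_neg h0] at he
      have h2 : Fintype.card Fq ^ e.natDegree ≤ ⌊E⌋₊ := by
        apply Nat.le_floor
        exact_mod_cast he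
      exact (Nat.le_log_iff_pow_le Fintype.one_lt_card (by omega)).2 h2
  -- Nat.card is at most the TupSet count
  have hcard1 : (Nat.card {e : Fin s → Polynomial Fq //
      (∀ i, fabsP Fq (e i) ≤ E) ∧
      ∑ i, a i * (algebraMap (Polynomial Fq) (RatFunc Fq) (e i)) ^ 3 = 0} : ℝ)
      ≤ ((TupSet s a D 0).card : ℝ) := by
    have hmap : ∀ e : {e : Fin s → Polynomial Fq //
        (∀ i, fabsP Fq (e i) ≤ E) ∧
        ∑ i, a i * (algebraMap (Polynomial Fq) (RatFunc Fq) (e i)) ^ 3 = 0},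
        e.1 ∈ TupSet s a D 0 := by
      rintro ⟨e, he1, he2⟩
      simp only [TupSet, Finset.mem_filter, Fintype.mem_piFinset]
      exact ⟨fun i => hdegle _ (he1 i), he2⟩
    have h1 : Nat.card {e : Fin s → Polynomial Fq //
        (∀ i, fabsP Fq (e i) ≤ E) ∧
        ∑ i, a i * (algebraMap (Polynomial Fq) (RatFunc Fq) (e i)) ^ 3 = 0}
        ≤ Nat.card {e : Fin s → Polynomial Fq // e ∈ TupSet s a D 0} := by
      apply Nat.card_le_card_of_injective (fun e => ⟨e.1, hmap e⟩)
      rintro ⟨e, he⟩ ⟨f, hf⟩ h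
      simpa using h
    have h2 : Nat.card {e : Fin s → Polynomial Fq // e ∈ TupSet s a D 0}
        = (TupSet s a D 0).card := Nat.card_eq_finsetCard _
    exact_mod_cast h1.trans_eq h2
  -- divisor bound at level 3D
  set Λ : ℕ := ⌊Cd * ((Fintype.card Fq : ℝ) ^ ε') ^ (3*D)⌋₊ with hΛ
  have hxε1 : (1:ℝ) ≤ (Fintype.card Fq : ℝ) ^ ε' := Real.one_le_rpow hq1 hε'0.le
  have hX1 : (1:ℝ) ≤ Cd * ((Fintype.card Fq : ℝ) ^ ε') ^ (3*D) := by
    have : (1:ℝ) ≤ ((Fintype.card Fq : ℝ) ^ ε') ^ (3*D) := one_le_pow₀ hxε1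
    nlinarith
  have hdiv : ∀ n : Polynomial Fq, n ≠ 0 → n.natDegree ≤ 3*D → (Dset Fq n).card ≤ Λ := by
    intro n hn hdeg
    apply Nat.le_floor
    refine (hdivb n hn).trans ?_
    apply mul_le_mul_of_nonneg_left _ (by linarith)
    exact pow_le_pow_right₀ hxε1 hdeg
  set N : ℕ := (Ppoly Fq D).card with hN
  have hN1 : 1 ≤ N := Ppoly_nonempty Fq D
  -- the per-s combinatorial bound
  have htup4 : ∀ (b : Fin 4 → RatFunc Fq), (∀ i, b i ≠ 0) → ∀ c : RatFunc Fq,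
      (TupSet 4 b D c).card ≤ (9 + 2*Λ) * N^2 := by
    intro b hb c
    refine (tup4_le b D c).trans ?_
    have h1 := sol4_le (b 0) (b 1) (b 2) (b 3) D c
    have h2 := quad_total hchar (b 0) (b 1) (hb 0) (hb 1) D Λ hdiv
    have h3 := quad_total hchar (b 2) (b 3) (hb 2) (hb 3) D Λ hdiv
    rw [← hN] at h2 h3
    have h4 : 2 * (Sol4 (b 0) (b 1) (b 2) (b 3) D c).card ≤ 2 * ((9 + 2*Λ) * N^2) := by
      linarith
    exact Nat.le_of_mul_le_mul_left h4 (by norm_num)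
  set m : ℕ := if s ≤ 4 then 2 else s - 2 with hm
  have hmain : (TupSet s a D 0).card ≤ (9 + 2*Λ) * N ^ m := by
    have h9 : 3 ≤ 9 + 2*Λ := by omega
    interval_cases s
    · -- s = 2
      have h2 : (TupSet 2 a D 0).card ≤ N * 3 :=
        tup_succ_le 1 a D 0 3 (fun c' => tup1_le _ (fun i => ha _) D c')
      have h5 : N * 3 ≤ (9 + 2*Λ) * N ^ 2 := by nlinarith
      simp only [hm]
      norm_num
      linarith
    · -- s = 3
      have h2 : (TupSet 3 a D 0).card ≤ N * (N * 3) :=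
        tup_succ_le 2 a D 0 (N*3) (fun c' =>
          tup_succ_le 1 _ D c' 3 (fun c'' => tup1_le _ (fun i => ha _) D c''))
      have h5 : N * (N * 3) ≤ (9 + 2*Λ) * N ^ 2 := by nlinarith
      simp only [hm]
      norm_num
      linarith
    · -- s = 4
      have h2 := htup4 a ha 0
      simpa [hm] using h2
    · -- s = 5
      have h2 : (TupSet 5 a D 0).card ≤ N * ((9 + 2*Λ) * N^2) :=
        tup_succ_le 4 a D 0 _ (fun c' => htup4 _ (fun i => ha _) c')
      have h5 : N * ((9 + 2*Λ) * N^2) ≤ (9 + 2*Λ) * N ^ 3 := by nlinarith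
      simp only [hm]
      norm_num
      linarith
    · -- s = 6
      have h2 : (TupSet 6 a D 0).card ≤ N * (N * ((9 + 2*Λ) * N^2)) :=
        tup_succ_le 5 a D 0 _ (fun c' =>
          tup_succ_le 4 _ D c' _ (fun c'' => htup4 _ (fun i => ha _) c''))
      have h5 : N * (N * ((9 + 2*Λ) * N^2)) ≤ (9 + 2*Λ) * N ^ 4 := by nlinarith
      simp only [hm]
      norm_num
      linarith
  -- real estimates
  have hmR : ((if s ≤ 4 then (2:ℝ) else (s:ℝ) - 2)) = (m : ℝ) := by
    by_cases h4 : s ≤ 4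
    · simp [hm, h4]
    · simp only [hm, if_neg h4]
      have : 5 ≤ s := by omega
      push_cast [Nat.cast_sub (by omega : 2 ≤ s)]
      ring
  have hkey : ((Fintype.card Fq : ℝ) ^ ε') ^ (3*D) ≤ E ^ ε := by
    have h1 : ((Fintype.card Fq : ℝ) ^ ε') ^ (3*D)
        = ((Fintype.card Fq : ℝ) ^ D) ^ ε := by
      rw [← Real.rpow_natCast ((Fintype.card Fq : ℝ) ^ ε') (3*D), ← Real.rpow_mul hq0,
        ← Real.rpow_natCast (Fintype.card Fq : ℝ) D, ← Real.rpow_mul hq0]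
      congr 1
      push_cast [hε']
      ring
    rw [h1]
    exact Real.rpow_le_rpow (by positivity) hqD hε.le
  have hΛR : ((9 + 2*Λ : ℕ) : ℝ) ≤ 11 * Cd * E ^ ε := by
    have hfloor : (Λ : ℝ) ≤ Cd * ((Fintype.card Fq : ℝ) ^ ε') ^ (3*D) :=
      Nat.floor_le (by positivity)
    have h11 : ((9 + 2*Λ : ℕ) : ℝ) ≤ 11 * (Cd * ((Fintype.card Fq : ℝ) ^ ε') ^ (3*D)) := by
      push_cast
      nlinarith
    refine h11.trans ?_
    have hEε : (0:ℝ) ≤ Cd := by linarith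
    calc 11 * (Cd * ((Fintype.card Fq : ℝ) ^ ε') ^ (3*D))
        ≤ 11 * (Cd * E ^ ε) := by
          apply mul_le_mul_of_nonneg_left _ (by norm_num)
          exact mul_le_mul_of_nonneg_left hkey hEε
      _ = 11 * Cd * E ^ ε := by ring
  have hNR : ((N:ℝ)) ^ m ≤ (Fintype.card Fq : ℝ) ^ (6:ℕ) * E ^ (m:ℝ) := by
    have hNq : (N:ℝ) ≤ (Fintype.card Fq : ℝ) ^ (D+1) := by
      calc (N:ℝ) ≤ ((Fintype.card Fq ^ (D+1) : ℕ) : ℝ) := by exact_mod_cast card_Ppoly Fq D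
        _ = (Fintype.card Fq : ℝ) ^ (D+1) := by push_cast; ring
    have hm6 : m ≤ 6 := by
      simp only [hm]
      split <;> omega
    calc ((N:ℝ)) ^ m ≤ ((Fintype.card Fq : ℝ) ^ (D+1)) ^ m := by
          apply pow_le_pow_left₀ (by positivity) hNq
      _ = (Fintype.card Fq : ℝ) ^ m * ((Fintype.card Fq : ℝ) ^ D) ^ m := by
          rw [pow_succ, mul_pow]; ring
      _ ≤ (Fintype.card Fq : ℝ) ^ (6:ℕ) * E ^ (m:ℝ) := by
          apply mul_le_mul
          · exact pow_le_pow_right₀ hq1 hm6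
          · rw [Real.rpow_natCast E m]
            exact pow_le_pow_left₀ (by positivity) hqD m
          · positivity
          · positivity
  have hCd0 : (0:ℝ) ≤ Cd := by linarith
  calc (Nat.card {e : Fin s → Polynomial Fq //
          (∀ i, fabsP Fq (e i) ≤ E) ∧
          ∑ i, a i * (algebraMap (Polynomial Fq) (RatFunc Fq) (e i)) ^ 3 = 0} : ℝ)
      ≤ ((TupSet s a D 0).card : ℝ) := hcard1
    _ ≤ (((9 + 2*Λ) * N ^ m : ℕ) : ℝ) := by exact_mod_cast hmain
    _ = ((9 + 2*Λ : ℕ) : ℝ) * ((N:ℝ))^m := by push_cast; ring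
    _ ≤ (11 * Cd * E ^ ε) * ((Fintype.card Fq : ℝ) ^ (6:ℕ) * E ^ (m:ℝ)) := by
        apply mul_le_mul hΛR hNR (by positivity) ?_
        have h1 : (0:ℝ) ≤ E ^ ε := Real.rpow_nonneg hE0.le ε
        nlinarith
    _ = 11 * Cd * (Fintype.card Fq : ℝ) ^ (6:ℕ) * (E ^ (m:ℝ) * E ^ ε) := by ring
    _ = 11 * Cd * (Fintype.card Fq : ℝ) ^ (6:ℕ) * E ^ ((m:ℝ) + ε) := by
        rw [← Real.rpow_add hE0]
    _ = 11 * Cd * (Fintype.card Fq : ℝ) ^ (6:ℕ) * E ^ ((if s ≤ 4 then (2:ℝ) else (s:ℝ) - 2) + ε) := by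
        rw [hmR]
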